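/- Let U ⊆ ℚ be a semilinear set that is unbounded in one direction, i.e., U is not bounded but there exists a ∈ ℚ with U ⊆ [a,∞) or U ⊆ (−∞,a]. Then there exists b ∈ ℚ such that the set W = {x ∈ ℚ | x ∈ U and b − x ∈ U} is bounded and contains a nonempty open interval; in particular W is bounded and contains more than one point. -/

import Mathlib

/-- A linear set in ℚ^n: the solution set of a finite conjunction of linear
inequalities `c₁x₁+…+cₙxₙ ≤ b` or `c₁x₁+…+cₙxₙ < b` with rational coefficients. -/
def IsLinearSetQ (n : ℕ) (S : Set (Fin n → ℚ)) : Prop :=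
  ∃ (m : ℕ) (c : Fin m → Fin n → ℚ) (b : Fin m → ℚ) (strict : Fin m → Bool),
    S = {x | ∀ i, if strict i then (∑ j, c i j * x j) < b i else (∑ j, c i j * x j) ≤ b i}

/-- A semilinear set: a finite union of linear sets. -/
def IsSemilinear (n : ℕ) (S : Set (Fin n → ℚ)) : Prop :=
  ∃ (k : ℕ) (f : Fin k → Set (Fin n → ℚ)), (∀ i, IsLinearSetQ n (f i)) ∧ S = ⋃ i, f i

/-- A unary semilinear relation: a semilinear subset of ℚ. -/
def IsSemilinear1 (U : Set ℚ) : Prop :=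
  IsSemilinear 1 {v : Fin 1 → ℚ | v 0 ∈ U}

/-- A set U ⊆ ℚ is bounded if U ⊆ [−a, a] for some a ∈ ℚ. -/
def BoundedSet (U : Set ℚ) : Prop := ∃ a : ℚ, U ⊆ Set.Icc (-a) a

lemma linear1_between {S : Set (Fin 1 → ℚ)} (hS : IsLinearSetQ 1 S) {x y z : ℚ}
    (hx : (fun _ => x) ∈ S) (hz : (fun _ => z) ∈ S) (h1 : x ≤ y) (h2 : y ≤ z) :
    (fun _ : Fin 1 => y) ∈ S := by
  obtain ⟨m, c, b, strict, rfl⟩ := hS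
  intro j
  have hxj := hx j
  have hzj := hz j
  simp only [Fin.sum_univ_one] at *
  rcases le_total 0 (c j 0) with hc | hc <;> cases hs : strict j <;>
    simp [hs] at hxj hzj ⊢ <;> nlinarith

lemma semi_mem {U : Set ℚ} (hU : IsSemilinear1 U) :
    ∃ (k : ℕ) (f : Fin k → Set (Fin 1 → ℚ)), (∀ i, IsLinearSetQ 1 (f i)) ∧
      ∀ x : ℚ, x ∈ U ↔ ∃ i, (fun _ : Fin 1 => x) ∈ f i := by
  obtain ⟨k, f, hf, heq⟩ := hU
  refine ⟨k, f, hf, fun x => ?_⟩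
  have := Set.ext_iff.mp heq (fun _ : Fin 1 => x)
  simpa [Set.mem_iUnion] using this

lemma semi_ioi {U : Set ℚ} (hU : IsSemilinear1 U) (h : ∀ M, ∃ x ∈ U, M < x) :
    ∃ t, Set.Ioi t ⊆ U := by
  obtain ⟨k, f, hf, hmem⟩ := semi_mem hU
  by_cases hk : ∃ i, ∀ M, ∃ x, (fun _ : Fin 1 => x) ∈ f i ∧ M < x
  · obtain ⟨i, hi⟩ := hk
    obtain ⟨x0, hx0, -⟩ := hi 0
    refine ⟨x0, fun y hy => ?_⟩
    obtain ⟨z, hz, hyz⟩ := hi y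
    exact (hmem y).mpr ⟨i, linear1_between (hf i) hx0 hz (le_of_lt hy) (le_of_lt hyz)⟩
  · exfalso
    push_neg at hk
    choose M hM using hk
    obtain ⟨B, hB⟩ := Finite.exists_le M
    obtain ⟨x, hx, hBx⟩ := h B
    obtain ⟨i, hi⟩ := (hmem x).mp hx
    exact absurd (hM i x hi) (not_le.mpr (lt_of_le_of_lt (hB i) hBx))

lemma semi_iio {U : Set ℚ} (hU : IsSemilinear1 U) (h : ∀ M, ∃ x ∈ U, x < M) :
    ∃ t, Set.Iio t ⊆ U := by
  obtain ⟨k, f, hf, hmem⟩ := semi_mem hU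
  by_cases hk : ∃ i, ∀ M, ∃ x, (fun _ : Fin 1 => x) ∈ f i ∧ x < M
  · obtain ⟨i, hi⟩ := hk
    obtain ⟨x0, hx0, -⟩ := hi 0
    refine ⟨x0, fun y hy => ?_⟩
    obtain ⟨z, hz, hyz⟩ := hi y
    exact (hmem y).mpr ⟨i, linear1_between (hf i) hz hx0 (le_of_lt hyz) (le_of_lt hy)⟩
  · exfalso
    push_neg at hk
    choose M hM using hk
    obtain ⟨B, hB⟩ := Finite.exists_le (fun i => -(M i))
    obtain ⟨x, hx, hBx⟩ := h (-B)
    obtain ⟨i, hi⟩ := (hmem x).mp hx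
    have := hM i x hi
    have := hB i
    linarith

/-- If U is a semilinear subset of ℚ that is unbounded in one direction, then
there exists b ∈ ℚ such that W = {x | x ∈ U ∧ b − x ∈ U} is bounded and
contains a nonempty open interval. -/
theorem stmt1 (U : Set ℚ) (hU : IsSemilinear1 U)
    (hnb : ¬ BoundedSet U)
    (hone : ∃ a : ℚ, U ⊆ Set.Ici a ∨ U ⊆ Set.Iic a) :
    ∃ b : ℚ, BoundedSet {x : ℚ | x ∈ U ∧ b - x ∈ U} ∧
      ∃ c d : ℚ, c < d ∧ Set.Ioo c d ⊆ {x : ℚ | x ∈ U ∧ b - x ∈ U} := by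
  obtain ⟨a, ha | ha⟩ := hone
  · have hub : ∀ M, ∃ x ∈ U, M < x := by
      intro M
      by_contra hcon
      push_neg at hcon
      exact hnb ⟨max (-a) M, fun x hx =>
        ⟨by have := ha hx; simp only [Set.mem_Ici] at this; linarith [le_max_left (-a) M],
         le_trans (hcon x hx) (le_max_right _ _)⟩⟩
    obtain ⟨t, ht⟩ := semi_ioi hU hub
    refine ⟨2 * t + 2, ⟨max (-a) (2 * t + 2 - a), fun x hx => ?_⟩, t, t + 2, by linarith, ?_⟩
    · obtain ⟨h1, h2⟩ := hx
      have ha1 := ha h1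
      have ha2 := ha h2
      simp only [Set.mem_Ici] at ha1 ha2
      constructor
      · have := le_max_left (-a) (2 * t + 2 - a); linarith
      · have := le_max_right (-a) (2 * t + 2 - a); linarith
    · rintro x ⟨hx1, hx2⟩
      exact ⟨ht (by simpa using hx1), ht (by simp only [Set.mem_Ioi]; linarith)⟩
  · have hub : ∀ M, ∃ x ∈ U, x < M := by
      intro M
      by_contra hcon
      push_neg at hcon
      exact hnb ⟨max a (-M), fun x hx =>
        ⟨by have := hcon x hx; have := le_max_right a (-M); linarith,
         by have := ha hx; simp only [Set.mem_Iic] at this; linarith [le_max_left a (-M)]⟩⟩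
    obtain ⟨t, ht⟩ := semi_iio hU hub
    refine ⟨2 * t - 2, ⟨max a (-(2 * t - 2 - a)), fun x hx => ?_⟩, t - 2, t, by linarith, ?_⟩
    · obtain ⟨h1, h2⟩ := hx
      have ha1 := ha h1
      have ha2 := ha h2
      simp only [Set.mem_Iic] at ha1 ha2
      constructor
      · have := le_max_right a (-(2 * t - 2 - a)); linarith
      · have := le_max_left a (-(2 * t - 2 - a)); linarith
    · rintro x ⟨hx1, hx2⟩
      exact ⟨ht (by simpa using hx2), ht (by simp only [Set.mem_Iio]; linarith)⟩
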